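/- If α and β are positive probability measures on Σ and S ∈ FREQ^α, then for any family of functions C_i : Σ* → ℕ (indexed by a nonempty set), inf_i liminf_{w→S} C_i(w)/I_β(w) = (1/(H_k(α)+D_k(α‖β))) · inf_i liminf_{w→S} C_i(w)/(|w| log k), and similarly with limsup in place of liminf. In particular, finite-state β-dimension as defined by compression satisfies dim_FS^β(S) = dim_FS(S)/(H_k(α)+D_k(α‖β)). -/

import Mathlib

open Filter
open scoped ENNReal NNReal Topology

/-- The length-`n` prefix of the sequence `S`. -/
def pref {k : ℕ} (S : ℕ → Fin k) (n : ℕ) : List (Fin k) := (List.range n).map S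

/-- Self-information `I_β(w) = Σ_{i<|w|} log(1/β(w[i]))` (base-2 logs). -/
noncomputable def selfInfo {k : ℕ} (β : Fin k → ℝ) (w : List (Fin k)) : ℝ :=
  (w.map fun a => Real.logb 2 (β a)⁻¹).sum

/-- Lemma 5.2, abstract form: if `α, β` are positive probability
measures and `S ∈ FREQ^α`, then for any nonempty family of compressors
`C_i : Σ* → ℕ`,
`inf_i liminf C_i(w)/I_β(w) = (1/(H_k(α)+D_k(α‖β)))·inf_i liminf C_i(w)/(|w| log k)`,
and likewise with `limsup` (computed in `ℝ≥0∞`). -/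

lemma my_liminf_const_mul {ι : Type*} {f : Filter ι} {u : ι → ℝ≥0∞} {a : ℝ≥0∞}
    (ha0 : a ≠ 0) (hat : a ≠ ⊤) :
    liminf (fun x => a * u x) f = a * liminf u f := by
  have h1 : liminf (fun x => a * u x) f = (limsup (fun x => (a * u x)⁻¹) f)⁻¹ := by
    rw [← ENNReal.inv_liminf, inv_inv]
  rw [h1]
  have h2 : (fun x => (a * u x)⁻¹) = fun x => a⁻¹ * (u x)⁻¹ := by
    funext x; exact ENNReal.mul_inv (Or.inl ha0) (Or.inl hat)
  rw [h2, ENNReal.limsup_const_mul_of_ne_top (by simpa using ha0),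
    ENNReal.mul_inv (Or.inl (by simpa using hat)) (Or.inl (by simpa using ha0)),
    inv_inv]
  congr 1
  rw [← ENNReal.inv_liminf]
  simp

lemma my_limsup_mul_le {ι : Type*} {f : Filter ι} {r g : ι → ℝ≥0∞} {c : ℝ≥0∞}
    (hr : Tendsto r f (nhds c)) (hc0 : c ≠ 0) (hct : c ≠ ⊤) :
    limsup (fun n => r n * g n) f ≤ c * limsup g f := by
  set Y := limsup g f with hY
  have key : ∀ δ : ℝ≥0∞, δ ≠ 0 → δ ≠ ⊤ → limsup (fun n => r n * g n) f ≤ (c + δ) * Y := by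
    intro δ hδ0 hδt
    have hev : ∀ᶠ n in f, r n < c + δ := hr (Iio_mem_nhds (ENNReal.lt_add_right hct hδ0))
    calc limsup (fun n => r n * g n) f ≤ limsup (fun n => (c + δ) * g n) f :=
          limsup_le_limsup (hev.mono fun n h => mul_le_mul_left h.le (g n))
      _ = (c + δ) * Y := ENNReal.limsup_const_mul_of_ne_top (by finiteness)
  rcases eq_or_ne Y 0 with h0 | h0
  · simpa [h0] using key 1 one_ne_zero ENNReal.one_ne_top
  refine ENNReal.le_of_forall_pos_le_add fun ε hε hlt => ?_
  have hYt : Y ≠ ⊤ := by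
    intro h; rw [h, ENNReal.mul_top hc0] at hlt; exact (lt_irrefl _ hlt)
  have hδ0 : (ε : ℝ≥0∞) / Y ≠ 0 := (ENNReal.div_pos (by exact_mod_cast hε.ne') hYt).ne'
  have hδt : (ε : ℝ≥0∞) / Y ≠ ⊤ := by
    simp [ENNReal.div_eq_top, h0, ENNReal.coe_ne_top]
  calc limsup (fun n => r n * g n) f ≤ (c + (ε : ℝ≥0∞) / Y) * Y := key _ hδ0 hδt
    _ = c * Y + ((ε : ℝ≥0∞) / Y) * Y := add_mul _ _ _
    _ = c * Y + ε := by rw [ENNReal.div_mul_cancel h0 hYt]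

lemma my_liminf_mul_le {ι : Type*} {f : Filter ι} {r g : ι → ℝ≥0∞} {c : ℝ≥0∞}
    (hr : Tendsto r f (nhds c)) (hc0 : c ≠ 0) (hct : c ≠ ⊤) :
    liminf (fun n => r n * g n) f ≤ c * liminf g f := by
  set Y := liminf g f with hY
  have key : ∀ δ : ℝ≥0∞, δ ≠ 0 → δ ≠ ⊤ → liminf (fun n => r n * g n) f ≤ (c + δ) * Y := by
    intro δ hδ0 hδt
    have hev : ∀ᶠ n in f, r n < c + δ := hr (Iio_mem_nhds (ENNReal.lt_add_right hct hδ0))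
    calc liminf (fun n => r n * g n) f ≤ liminf (fun n => (c + δ) * g n) f :=
          liminf_le_liminf (hev.mono fun n h => mul_le_mul_left h.le (g n))
      _ = (c + δ) * Y := my_liminf_const_mul (by simp [hδ0]) (by finiteness)
  rcases eq_or_ne Y 0 with h0 | h0
  · simpa [h0] using key 1 one_ne_zero ENNReal.one_ne_top
  refine ENNReal.le_of_forall_pos_le_add fun ε hε hlt => ?_
  have hYt : Y ≠ ⊤ := by
    intro h; rw [h, ENNReal.mul_top hc0] at hlt; exact (lt_irrefl _ hlt)
  have hδ0 : (ε : ℝ≥0∞) / Y ≠ 0 := (ENNReal.div_pos (by exact_mod_cast hε.ne') hYt).ne'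
  have hδt : (ε : ℝ≥0∞) / Y ≠ ⊤ := by
    simp [ENNReal.div_eq_top, h0, ENNReal.coe_ne_top]
  calc liminf (fun n => r n * g n) f ≤ (c + (ε : ℝ≥0∞) / Y) * Y := key _ hδ0 hδt
    _ = c * Y + ((ε : ℝ≥0∞) / Y) * Y := add_mul _ _ _
    _ = c * Y + ε := by rw [ENNReal.div_mul_cancel h0 hYt]

lemma my_liminf_mul_eq {ι : Type*} {f : Filter ι} {r g : ι → ℝ≥0∞} {c : ℝ≥0∞}
    (hr : Tendsto r f (nhds c)) (hc0 : c ≠ 0) (hct : c ≠ ⊤)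
    (hrt : ∀ n, r n ≠ ⊤) (hgt : ∀ n, g n ≠ ⊤) :
    liminf (fun n => r n * g n) f = c * liminf g f := by
  refine le_antisymm (my_liminf_mul_le hr hc0 hct) ?_
  rw [← ENNReal.inv_le_inv, ENNReal.inv_liminf]
  have h2 : (fun n => (r n * g n)⁻¹) = fun n => (r n)⁻¹ * (g n)⁻¹ := by
    funext n; exact ENNReal.mul_inv (Or.inr (hgt n)) (Or.inl (hrt n))
  rw [h2]
  calc limsup (fun n => (r n)⁻¹ * (g n)⁻¹) f ≤ c⁻¹ * limsup (fun n => (g n)⁻¹) f :=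
        my_limsup_mul_le (hr.inv) (by simpa using hct) (by simpa using hc0)
    _ = c⁻¹ * (liminf g f)⁻¹ := by rw [← ENNReal.inv_liminf]
    _ = (c * liminf g f)⁻¹ := (ENNReal.mul_inv (Or.inl hc0) (Or.inl hct)).symm

lemma my_limsup_mul_eq {ι : Type*} {f : Filter ι} {r g : ι → ℝ≥0∞} {c : ℝ≥0∞}
    (hr : Tendsto r f (nhds c)) (hc0 : c ≠ 0) (hct : c ≠ ⊤)
    (hrt : ∀ n, r n ≠ ⊤) (hgt : ∀ n, g n ≠ ⊤) :
    limsup (fun n => r n * g n) f = c * limsup g f := by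
  refine le_antisymm (my_limsup_mul_le hr hc0 hct) ?_
  rw [← ENNReal.inv_le_inv, ENNReal.inv_limsup]
  have h2 : (fun n => (r n * g n)⁻¹) = fun n => (r n)⁻¹ * (g n)⁻¹ := by
    funext n; exact ENNReal.mul_inv (Or.inr (hgt n)) (Or.inl (hrt n))
  rw [h2]
  calc liminf (fun n => (r n)⁻¹ * (g n)⁻¹) f ≤ c⁻¹ * liminf (fun n => (g n)⁻¹) f :=
        my_liminf_mul_le (hr.inv) (by simpa using hct) (by simpa using hc0)
    _ = c⁻¹ * (limsup g f)⁻¹ := by rw [← ENNReal.inv_limsup]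
    _ = (c * limsup g f)⁻¹ := (ENNReal.mul_inv (Or.inl hc0) (Or.inl hct)).symm

lemma selfInfo_eq_sum_count {k : ℕ} (β : Fin k → ℝ) (w : List (Fin k)) :
    selfInfo β w = ∑ a, (w.count a : ℝ) * Real.logb 2 (β a)⁻¹ := by
  induction w with
  | nil => simp [selfInfo]
  | cons x w ih =>
    have h : selfInfo β (x :: w) = Real.logb 2 (β x)⁻¹ + selfInfo β w := by
      simp [selfInfo]
    rw [h, ih]
    simp only [List.count_cons]
    push_cast
    simp only [add_mul, Finset.sum_add_distrib, ite_mul, one_mul, zero_mul,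
      Finset.sum_ite_eq' Finset.univ]
    simp [add_comm]

theorem finite_state_beta_dimension_freq_formula
    (k : ℕ) (hk : 2 ≤ k)
    (α β : Fin k → ℝ) (hαpos : ∀ a, 0 < α a) (hβpos : ∀ a, 0 < β a)
    (hα1 : ∑ a, α a = 1) (hβ1 : ∑ a, β a = 1)
    (S : ℕ → Fin k)
    (hfreq : ∀ a : Fin k, Tendsto
      (fun n : ℕ => ((pref S n).count a : ℝ) / n) atTop (nhds (α a)))
    (ι : Type) [Nonempty ι] (C : ι → List (Fin k) → ℕ) :
    (⨅ i, liminf (fun n : ℕ =>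
        ENNReal.ofReal ((C i (pref S n) : ℝ) / selfInfo β (pref S n))) atTop) =
      ENNReal.ofReal
          (((∑ a, α a * Real.logb 2 (α a)⁻¹) / Real.logb 2 k +
            (∑ a, α a * Real.logb 2 (α a / β a)) / Real.logb 2 k)⁻¹) *
        (⨅ i, liminf (fun n : ℕ =>
          ENNReal.ofReal ((C i (pref S n) : ℝ) / ((n : ℝ) * Real.logb 2 k))) atTop) ∧
    (⨅ i, limsup (fun n : ℕ =>
        ENNReal.ofReal ((C i (pref S n) : ℝ) / selfInfo β (pref S n))) atTop) =
      ENNReal.ofReal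
          (((∑ a, α a * Real.logb 2 (α a)⁻¹) / Real.logb 2 k +
            (∑ a, α a * Real.logb 2 (α a / β a)) / Real.logb 2 k)⁻¹) *
        (⨅ i, limsup (fun n : ℕ =>
          ENNReal.ofReal ((C i (pref S n) : ℝ) / ((n : ℝ) * Real.logb 2 k))) atTop) := by
  set L : ℝ := ∑ a, α a * Real.logb 2 (β a)⁻¹ with hLdef
  have hlogk : 0 < Real.logb 2 k :=
    Real.logb_pos one_lt_two (by exact_mod_cast lt_of_lt_of_le one_lt_two hk)
  have hβlt1 : ∀ a, β a < 1 := by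
    intro a
    obtain ⟨b, hb⟩ := Fintype.exists_ne_of_one_lt_card (by simp; omega) a
    calc β a < ∑ x, β x := Finset.single_lt_sum hb (Finset.mem_univ a) (Finset.mem_univ b)
          (hβpos b) (fun c _ _ => (hβpos c).le)
      _ = 1 := hβ1
  have hterm : ∀ a : Fin k, 0 < Real.logb 2 (β a)⁻¹ := fun a =>
    Real.logb_pos one_lt_two ((one_lt_inv_iff₀).2 ⟨hβpos a, hβlt1 a⟩)
  have hL : 0 < L := Finset.sum_pos (fun a _ => mul_pos (hαpos a) (hterm a))
    (Finset.univ_nonempty_iff.mpr ⟨⟨0, by omega⟩⟩)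
  -- the limit of selfInfo / n
  have htend : Tendsto (fun n : ℕ => selfInfo β (pref S n) / n) atTop (nhds L) := by
    have h1 : Tendsto (fun n : ℕ => ∑ a, ((pref S n).count a : ℝ) / n * Real.logb 2 (β a)⁻¹)
        atTop (nhds L) := tendsto_finset_sum _ (fun a _ => (hfreq a).mul_const _)
    refine h1.congr fun n => ?_
    rw [selfInfo_eq_sum_count, Finset.sum_div]
    exact Finset.sum_congr rfl fun a _ => by ring
  -- the constant identity
  have hconst : ((∑ a, α a * Real.logb 2 (α a)⁻¹) / Real.logb 2 k +
      (∑ a, α a * Real.logb 2 (α a / β a)) / Real.logb 2 k)⁻¹ = Real.logb 2 k / L := by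
    rw [← add_div, ← Finset.sum_add_distrib]
    have : ∀ a ∈ Finset.univ, α a * Real.logb 2 (α a)⁻¹ + α a * Real.logb 2 (α a / β a)
        = α a * Real.logb 2 (β a)⁻¹ := by
      intro a _
      rw [← mul_add, ← Real.logb_mul (inv_ne_zero (hαpos a).ne')
        (div_ne_zero (hαpos a).ne' (hβpos a).ne')]
      congr 2
      rw [inv_eq_one_div, inv_eq_one_div, div_mul_div_comm, one_mul,
        div_eq_div_iff (mul_pos (hαpos a) (hβpos a)).ne' (hβpos a).ne']
      ring
    rw [Finset.sum_congr rfl this, ← hLdef, inv_div]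
  set I : ℕ → ℝ := fun n => selfInfo β (pref S n) with hIdef
  set c : ℝ≥0∞ := ENNReal.ofReal (Real.logb 2 k / L) with hcdef
  have hc0 : c ≠ 0 := (ENNReal.ofReal_pos.mpr (div_pos hlogk hL)).ne'
  have hct : c ≠ ⊤ := ENNReal.ofReal_ne_top
  set r : ℕ → ℝ≥0∞ := fun n => ENNReal.ofReal ((n * Real.logb 2 k) / I n) with hrdef
  have hr : Tendsto r atTop (nhds c) := by
    have h1 : Tendsto (fun n : ℕ => Real.logb 2 k * (I n / n)⁻¹) atTop
        (nhds (Real.logb 2 k * L⁻¹)) := (htend.inv₀ hL.ne').const_mul _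
    have h2 : Tendsto (fun n : ℕ => (n * Real.logb 2 k) / I n) atTop
        (nhds (Real.logb 2 k / L)) := by
      rw [div_eq_mul_inv]
      refine h1.congr fun n => ?_
      rw [inv_div]
      ring
    exact ENNReal.tendsto_ofReal h2
  have hIpos : ∀ᶠ n in atTop, 0 < I n := by
    filter_upwards [htend (Ioi_mem_nhds hL) , eventually_ge_atTop 1] with n h1 h2
    have hn : (0:ℝ) < n := by exact_mod_cast h2
    have := mul_pos (show (0:ℝ) < I n / n from h1) hn
    rwa [div_mul_cancel₀ _ hn.ne'] at this
  have heq : ∀ i : ι, (fun n : ℕ => ENNReal.ofReal ((C i (pref S n) : ℝ) / I n)) =ᶠ[atTop]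
      fun n => r n * ENNReal.ofReal ((C i (pref S n) : ℝ) / ((n : ℝ) * Real.logb 2 k)) := by
    intro i
    filter_upwards [hIpos, eventually_ge_atTop 1] with n hI hn
    have hn' : (0:ℝ) < n := by exact_mod_cast hn
    rw [hrdef, ← ENNReal.ofReal_mul (by positivity)]
    congr 1
    rw [div_mul_div_comm, mul_comm (↑n * Real.logb 2 k), mul_div_mul_right _ _
      (by positivity : (↑n * Real.logb 2 k) ≠ 0)]
  have hconst' : ENNReal.ofReal
      (((∑ a, α a * Real.logb 2 (α a)⁻¹) / Real.logb 2 k +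
        (∑ a, α a * Real.logb 2 (α a / β a)) / Real.logb 2 k)⁻¹) = c := by
    rw [hcdef, hconst]
  constructor
  · have hmain : ∀ i : ι, liminf (fun n : ℕ =>
        ENNReal.ofReal ((C i (pref S n) : ℝ) / I n)) atTop =
        c * liminf (fun n : ℕ =>
          ENNReal.ofReal ((C i (pref S n) : ℝ) / ((n : ℝ) * Real.logb 2 k))) atTop := by
      intro i
      rw [liminf_congr (heq i)]
      exact my_liminf_mul_eq hr hc0 hct (fun n => ENNReal.ofReal_ne_top)
        (fun n => ENNReal.ofReal_ne_top)
    simp only [hmain, hconst']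
    exact (iInf_congr hmain).trans (ENNReal.mul_iInf_of_ne hc0 hct).symm
  · have hmain : ∀ i : ι, limsup (fun n : ℕ =>
        ENNReal.ofReal ((C i (pref S n) : ℝ) / I n)) atTop =
        c * limsup (fun n : ℕ =>
          ENNReal.ofReal ((C i (pref S n) : ℝ) / ((n : ℝ) * Real.logb 2 k))) atTop := by
      intro i
      rw [limsup_congr (heq i)]
      exact my_limsup_mul_eq hr hc0 hct (fun n => ENNReal.ofReal_ne_top)
        (fun n => ENNReal.ofReal_ne_top)
    simp only [hmain, hconst']
    exact (iInf_congr hmain).trans (ENNReal.mul_iInf_of_ne hc0 hct).symm
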